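/- Let F be a field and n ≥ 1. If (X, v) and (Y, w) are two regular pairs in M_n(F) × F^n whose matrices have equal characteristic polynomials, then there exists a unique g ∈ GL_n(F) such that g⁻¹Xg = Y and v·g = w. In other words, the map sending a regular pair to the characteristic polynomial of its matrix has GL_n(F) acting simply transitively on each of its fibers. -/

import Mathlib

open Matrix Polynomial Finset

namespace RegPairAux

variable {F : Type*} [Field F] {n : ℕ}

/-- row `i` of a product. -/
lemma mul_row (A B : Matrix (Fin n) (Fin n) F) (i : Fin n) :
    (A * B) i = A i ᵥ* B := by
  ext j; simp [Matrix.mul_apply, Matrix.vecMul, dotProduct]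

/-- `vecMul` as a linear map in the matrix argument. -/
noncomputable def vml (v : Fin n → F) :
    Matrix (Fin n) (Fin n) F →ₗ[F] (Fin n → F) where
  toFun M := v ᵥ* M
  map_add' A B := Matrix.vecMul_add A B v
  map_smul' c M := by
    ext j
    simp [Matrix.vecMul, dotProduct, Finset.mul_sum, mul_left_comm]

lemma vecMul_eq_sum_smul (x : Fin n → F) (M : Matrix (Fin n) (Fin n) F) :
    x ᵥ* M = ∑ i, x i • M i := by
  ext j
  simp [Matrix.vecMul, dotProduct, Finset.sum_apply]

/-- companion-type matrix of a polynomial -/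
def compMat (n : ℕ) {F : Type*} [Field F] (p : F[X]) : Matrix (Fin n) (Fin n) F :=
  Matrix.of fun i j => (if (i : ℕ) + 1 = (j : ℕ) then 1 else 0) -
    (if (i : ℕ) + 1 = n then p.coeff (j : ℕ) else 0)

lemma pow_card_eq (X : Matrix (Fin n) (Fin n) F) :
    X ^ n = - ∑ k : Fin n, X.charpoly.coeff (k : ℕ) • X ^ (k : ℕ) := by
  have h0 := X.aeval_self_charpoly
  rw [aeval_eq_sum_range] at h0
  have hd : X.charpoly.natDegree = n := by
    simpa using X.charpoly_natDegree_eq_dim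
  have hc : X.charpoly.coeff n = 1 := by
    have := X.charpoly_monic.coeff_natDegree
    rwa [hd] at this
  rw [hd, Finset.sum_range_succ, hc, one_smul, add_eq_zero_iff_eq_neg] at h0
  have h1 : -∑ x ∈ Finset.range n, X.charpoly.coeff x • X ^ x = X ^ n := by
    rw [h0, neg_neg]
  rw [Fin.sum_univ_eq_sum_range (fun k => X.charpoly.coeff k • X ^ k) n]
  exact h1.symm

lemma key (X : Matrix (Fin n) (Fin n) F) (v : Fin n → F) :
    Matrix.of (fun i : Fin n => v ᵥ* X ^ (i : ℕ)) * X
      = compMat n X.charpoly * Matrix.of (fun i : Fin n => v ᵥ* X ^ (i : ℕ)) := by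
  set P : Matrix (Fin n) (Fin n) F := Matrix.of (fun i : Fin n => v ᵥ* X ^ (i : ℕ)) with hPdef
  have hrow : ∀ i : Fin n, (P * X) i = (compMat n X.charpoly * P) i := by
    intro i
    rw [mul_row, mul_row]
    have hPiX : (P i) ᵥ* X = v ᵥ* X ^ ((i : ℕ) + 1) := by
      show (v ᵥ* X ^ (i : ℕ)) ᵥ* X = _
      rw [Matrix.vecMul_vecMul, ← pow_succ]
    rw [hPiX]
    rcases eq_or_lt_of_le (Nat.succ_le_of_lt i.isLt) with h | h
    · -- i + 1 = n
      have h' : (i : ℕ) + 1 = n := h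
      have hrowC : compMat n X.charpoly i
          = - fun k : Fin n => X.charpoly.coeff (k : ℕ) := by
        funext k
        have h1 : ¬ ((i : ℕ) + 1 = (k : ℕ)) := by omega
        simp [compMat, h1, h']
        omega
      rw [hrowC, Matrix.neg_vecMul,
        vecMul_eq_sum_smul (fun k : Fin n => X.charpoly.coeff (k : ℕ)) P,
        h', pow_card_eq X]
      show vml v (- ∑ k : Fin n, X.charpoly.coeff (k : ℕ) • X ^ (k : ℕ)) = _
      rw [map_neg, map_sum]
      congr 1
      refine Finset.sum_congr rfl fun k _ => ?_
      rw [_root_.map_smul]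
      rfl
    · -- i + 1 < n
      have hrowC : compMat n X.charpoly i
          = Pi.single (⟨(i : ℕ) + 1, h⟩ : Fin n) 1 := by
        funext k
        have h2 : (i : ℕ) + 1 ≠ n := Nat.ne_of_lt h
        by_cases hk : k = (⟨(i : ℕ) + 1, h⟩ : Fin n)
        · subst hk; simp [compMat, h2, Pi.single_apply]
        · have h3 : ¬ ((i : ℕ) + 1 = (k : ℕ)) := fun hh => hk (Fin.ext hh.symm)
          simp [compMat, h2, h3, Pi.single_apply, hk]
      rw [hrowC, Matrix.single_one_vecMul]
      rfl
  exact Matrix.ext fun i j => congrFun (hrow i) j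

end RegPairAux

/-- A pair `(X, v)` of an `n × n` matrix and a row vector is *regular* if
`v, vX, vX², …, vX^{n-1}` form a basis of `Fⁿ`. Row vectors are multiplied
by matrices on the right. -/
def IsRegularPair {F : Type*} [Field F] {n : ℕ}
    (X : Matrix (Fin n) (Fin n) F) (v : Fin n → F) : Prop :=
  LinearIndependent F (fun i : Fin n => Matrix.vecMul v (X ^ (i : ℕ))) ∧
  Submodule.span F (Set.range fun i : Fin n => Matrix.vecMul v (X ^ (i : ℕ))) = ⊤

/-- `GL_n(F)` acts simply transitively on the set of regular pairs with a given
characteristic polynomial: if `(X, v)` and `(Y, w)` are regular pairs with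
`charpoly X = charpoly Y`, then there is a unique `g ∈ GL_n(F)` with
`g⁻¹Xg = Y` and `v·g = w`. -/
theorem regular_pairs_simply_transitive {F : Type*} [Field F] {n : ℕ} (hn : 1 ≤ n)
    (X Y : Matrix (Fin n) (Fin n) F) (v w : Fin n → F)
    (hXv : IsRegularPair X v) (hYw : IsRegularPair Y w)
    (hchar : X.charpoly = Y.charpoly) :
    ∃! g : GL (Fin n) F,
      (↑g⁻¹ : Matrix (Fin n) (Fin n) F) * X * (↑g : Matrix (Fin n) (Fin n) F) = Y ∧
      Matrix.vecMul v (↑g : Matrix (Fin n) (Fin n) F) = w := by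
  classical
  set P : Matrix (Fin n) (Fin n) F := Matrix.of (fun i : Fin n => v ᵥ* X ^ (i : ℕ)) with hPdef
  set Q : Matrix (Fin n) (Fin n) F := Matrix.of (fun i : Fin n => w ᵥ* Y ^ (i : ℕ)) with hQdef
  set C : Matrix (Fin n) (Fin n) F := RegPairAux.compMat n X.charpoly with hCdef
  have hPu : IsUnit P := Matrix.linearIndependent_rows_iff_isUnit.mp hXv.1
  have hQu : IsUnit Q := Matrix.linearIndependent_rows_iff_isUnit.mp hYw.1
  obtain ⟨uP, hup⟩ := hPu
  obtain ⟨uQ, huq⟩ := hQu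
  have h1 : P * X = C * P := RegPairAux.key X v
  have h2 : Q * Y = C * Q := by
    have := RegPairAux.key Y w
    rw [← hchar] at this
    exact this
  have hiP : uP.inv * P = 1 := by rw [← hup]; exact uP.inv_val
  have hPi2 : P * uP.inv = 1 := by rw [← hup]; exact uP.val_inv
  have e2 : C * Q = Q * Y := h2.symm
  have e1' : X * uP.inv = uP.inv * C := by
    calc X * uP.inv = (uP.inv * P) * (X * uP.inv) := by rw [hiP, one_mul]
      _ = uP.inv * ((P * X) * uP.inv) := by simp only [mul_assoc]
      _ = uP.inv * ((C * P) * uP.inv) := by rw [h1]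
      _ = (uP.inv * C) * (P * uP.inv) := by simp only [mul_assoc]
      _ = uP.inv * C := by rw [hPi2, mul_one]
  set g : GL (Fin n) F := uP⁻¹ * uQ with hgdef
  have hgcoe : (↑g : Matrix (Fin n) (Fin n) F) = uP.inv * Q := by
    rw [← huq]; rfl
  have hXg : X * (↑g : Matrix (Fin n) (Fin n) F) = (↑g : Matrix (Fin n) (Fin n) F) * Y := by
    rw [hgcoe]
    calc X * (uP.inv * Q) = (X * uP.inv) * Q := by rw [mul_assoc]
      _ = (uP.inv * C) * Q := by rw [e1']
      _ = uP.inv * (C * Q) := by rw [mul_assoc]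
      _ = uP.inv * (Q * Y) := by rw [e2]
      _ = (uP.inv * Q) * Y := by rw [mul_assoc]
  refine ⟨g, ⟨?_, ?_⟩, ?_⟩
  · -- conjugation
    rw [mul_assoc, hXg, ← mul_assoc]
    show ((↑g⁻¹ : Matrix (Fin n) (Fin n) F) * (↑g : Matrix (Fin n) (Fin n) F)) * Y = Y
    rw [← Units.val_mul, inv_mul_cancel, Units.val_one, one_mul]
  · -- v ∙ g = w
    have hv0 : P (⟨0, hn⟩ : Fin n) = v := by
      show v ᵥ* X ^ ((⟨0, hn⟩ : Fin n) : ℕ) = v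
      simp
    have hw0 : Q (⟨0, hn⟩ : Fin n) = w := by
      show w ᵥ* Y ^ ((⟨0, hn⟩ : Fin n) : ℕ) = w
      simp
    have hPQ : P * (↑g : Matrix (Fin n) (Fin n) F) = Q := by
      rw [hgcoe, ← mul_assoc, hPi2, one_mul]
    calc v ᵥ* (↑g : Matrix (Fin n) (Fin n) F)
        = P (⟨0, hn⟩ : Fin n) ᵥ* (↑g : Matrix (Fin n) (Fin n) F) := by rw [hv0]
      _ = (P * (↑g : Matrix (Fin n) (Fin n) F)) (⟨0, hn⟩ : Fin n) := by
          rw [RegPairAux.mul_row]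
      _ = Q (⟨0, hn⟩ : Fin n) := by rw [hPQ]
      _ = w := hw0
  · -- uniqueness
    rintro g' ⟨hc, hv⟩
    have hcomm : X * (↑g' : Matrix (Fin n) (Fin n) F) = (↑g' : Matrix (Fin n) (Fin n) F) * Y := by
      conv_rhs => rw [← hc]
      rw [← mul_assoc, Units.mul_inv_cancel_left]
    have hpow : ∀ k : ℕ, X ^ k * (↑g' : Matrix (Fin n) (Fin n) F) = (↑g' : Matrix (Fin n) (Fin n) F) * Y ^ k := by
      intro k
      induction k with
      | zero => simp
      | succ m ih =>
        rw [pow_succ, pow_succ, mul_assoc, hcomm, ← mul_assoc, ih, mul_assoc]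
    have hPQ' : P * (↑g' : Matrix (Fin n) (Fin n) F) = Q := by
      refine Matrix.ext fun i j => congrFun ?_ j
      rw [RegPairAux.mul_row]
      show (v ᵥ* X ^ (i : ℕ)) ᵥ* (↑g' : Matrix (Fin n) (Fin n) F) = Q i
      rw [Matrix.vecMul_vecMul, hpow (i : ℕ), ← Matrix.vecMul_vecMul, hv]
      rfl
    have hval : (↑g' : Matrix (Fin n) (Fin n) F) = uP.inv * Q := by
      calc (↑g' : Matrix (Fin n) (Fin n) F)
          = (uP.inv * P) * ↑g' := by rw [hiP, one_mul]
        _ = uP.inv * (P * ↑g') := by rw [mul_assoc]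
        _ = uP.inv * Q := by rw [hPQ']
    exact Units.ext (hval.trans hgcoe.symm)
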